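/- Let p, q be coprime. The set of differences D = {x − y : x a p-th root of unity, y a q-th root of unity} has exactly pq elements, and the map (x,y) ↦ x − y is injective on the product of the two root-of-unity sets. -/

import Mathlib

open Complex Polynomial

lemma conj_eq_inv_of_pow_eq_one {n : ℕ} (hn : 0 < n) {x : ℂ} (hx : x ^ n = 1) :
    (starRingEnd ℂ) x = x⁻¹ := by
  have hx0 : x ≠ 0 := by
    intro h
    simp [h, zero_pow hn.ne'] at hx
  have habs : ‖x‖ = 1 := by
    have : ‖x‖ ^ n = 1 := by
      rw [← norm_pow, hx, norm_one]
    exact (pow_eq_one_iff_of_nonneg (norm_nonneg x) hn.ne').mp this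
  have : x * (starRingEnd ℂ) x = 1 := by
    rw [Complex.mul_conj]
    norm_cast
    simp [Complex.normSq_eq_norm_sq, habs]
  field_simp at this ⊢
  linear_combination this

lemma ne_zero_of_pow_eq_one {n : ℕ} (hn : 0 < n) {x : ℂ} (hx : x ^ n = 1) : x ≠ 0 := by
  intro h
  simp [h, zero_pow hn.ne'] at hx

lemma eq_one_of_pows {p q : ℕ} (hpq : Nat.Coprime p q) {x : ℂ}
    (h1 : x ^ p = 1) (h2 : x ^ q = 1) : x = 1 := by
  have : x ^ Nat.gcd p q = 1 := pow_gcd_eq_one.mpr ⟨h1, h2⟩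
  rwa [hpq.gcd_eq_one, pow_one] at this

lemma psk_inj {p q : ℕ} (hp : 0 < p) (hq : 0 < q) (hpq : Nat.Coprime p q)
    {x1 y1 x2 y2 : ℂ} (hx1 : x1 ^ p = 1) (hy1 : y1 ^ q = 1)
    (hx2 : x2 ^ p = 1) (hy2 : y2 ^ q = 1) (h : x1 - y1 = x2 - y2) :
    x1 = x2 ∧ y1 = y2 := by
  have hx10 := ne_zero_of_pow_eq_one hp hx1
  have hx20 := ne_zero_of_pow_eq_one hp hx2
  have hy10 := ne_zero_of_pow_eq_one hq hy1
  have hy20 := ne_zero_of_pow_eq_one hq hy2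
  by_cases hd : x1 = x2
  · exact ⟨hd, by linear_combination hd - h⟩
  exfalso
  set d := x1 - x2 with hdd
  have hd0 : d ≠ 0 := sub_ne_zero.mpr hd
  have hdy : y1 - y2 = d := by linear_combination -h
  -- conjugation
  have hcd : x1⁻¹ - x2⁻¹ = y1⁻¹ - y2⁻¹ := by
    have := congrArg (starRingEnd ℂ) (hdd ▸ hdy : y1 - y2 = x1 - x2)
    simpa [map_sub, conj_eq_inv_of_pow_eq_one hp hx1, conj_eq_inv_of_pow_eq_one hp hx2,
      conj_eq_inv_of_pow_eq_one hq hy1, conj_eq_inv_of_pow_eq_one hq hy2] using this.symm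
  have e1 : x1⁻¹ - x2⁻¹ = -d * (x1 * x2)⁻¹ := by rw [hdd]; field_simp; try ring
  have e2 : y1⁻¹ - y2⁻¹ = -d * (y1 * y2)⁻¹ := by rw [← hdy]; field_simp; try ring
  have hs : x1 * x2 = y1 * y2 := by
    have : -d * (x1 * x2)⁻¹ = -d * (y1 * y2)⁻¹ := by rw [← e1, ← e2, hcd]
    have := mul_left_cancel₀ (neg_ne_zero.mpr hd0) this
    exact inv_injective this
  have hs1 : x1 * x2 = 1 := by
    apply eq_one_of_pows hpq
    · rw [mul_pow, hx1, hx2, one_mul]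
    · rw [hs, mul_pow, hy1, hy2, one_mul]
  have hs2 : y1 * y2 = 1 := hs ▸ hs1
  -- now x2 = x1⁻¹, y2 = y1⁻¹ and x1 - x1⁻¹ = y1 - y1⁻¹
  have hx2' : x2 = x1⁻¹ := eq_inv_of_mul_eq_one_right (by linear_combination hs1)
  have hy2' : y2 = y1⁻¹ := eq_inv_of_mul_eq_one_right (by linear_combination hs2)
  have heq : x1 - x1⁻¹ = y1 - y1⁻¹ := by
    rw [← hx2', ← hy2']; rw [hdd] at hdy; linear_combination -hdy
  have hfac : (x1 - y1) * (x1 * y1 + 1) = 0 := by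
    have heq' : x1 * y1 * (x1 - x1⁻¹) = x1 * y1 * (y1 - y1⁻¹) := by rw [heq]
    field_simp at heq'
    have hfac0 : (x1 * y1) * ((x1 - y1) * (x1 * y1 + 1)) = 0 := by linear_combination (x1 * y1) * heq'
    exact (mul_eq_zero.mp hfac0).resolve_left (mul_ne_zero hx10 hy10)
  rcases mul_eq_zero.mp hfac with h0 | h0
  · have hxy : x1 = y1 := by linear_combination h0
    have : x1 = 1 := eq_one_of_pows hpq hx1 (hxy ▸ hy1)
    apply hd0
    rw [hdd, hx2', this]
    norm_num
  · -- x1 * y1 = -1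
    have hxy : x1 * y1 = -1 := by linear_combination h0
    have hyp : y1 ^ (2 * p) = 1 := by
      have : (x1 * y1) ^ p = (-1) ^ p := by rw [hxy]
      rw [mul_pow, hx1, one_mul] at this
      calc y1 ^ (2 * p) = (y1 ^ p) ^ 2 := by rw [← pow_mul, mul_comm]
        _ = ((-1 : ℂ) ^ p) ^ 2 := by rw [this]
        _ = 1 := by rw [← pow_mul, mul_comm, pow_mul]; norm_num
    have hg : y1 ^ Nat.gcd (2 * p) q = 1 := pow_gcd_eq_one.mpr ⟨hyp, hy1⟩
    have hg2 : Nat.gcd (2 * p) q ∣ 2 := by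
      have h1 : Nat.gcd (2 * p) q ∣ 2 * p := Nat.gcd_dvd_left _ _
      have h2 : Nat.Coprime (Nat.gcd (2 * p) q) p :=
        Nat.Coprime.coprime_dvd_left (Nat.gcd_dvd_right _ _) hpq.symm
      exact (Nat.Coprime.dvd_of_dvd_mul_right h2) h1
    have hy1sq : y1 ^ 2 = 1 := by
      obtain ⟨c, hc⟩ := hg2
      rw [hc, pow_mul, hg, one_pow]
    have : (y1 - 1) * (y1 + 1) = 0 := by linear_combination hy1sq
    have hyinv : y1⁻¹ = y1 := by
      rcases mul_eq_zero.mp this with h1 | h1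
      · have : y1 = 1 := by linear_combination h1
        rw [this]; norm_num
      · have : y1 = -1 := by linear_combination h1
        rw [this]; norm_num
    apply hd0
    rw [← hdy, hy2', hyinv, sub_self]

theorem psk_difference_set_card (p q : ℕ) (hp : 0 < p) (hq : 0 < q)
    (hpq : Nat.Coprime p q) :
    Set.InjOn (fun zp : ℂ × ℂ => zp.1 - zp.2)
      (({x : ℂ | x ^ p = 1} : Set ℂ) ×ˢ ({y : ℂ | y ^ q = 1} : Set ℂ)) ∧
    ({w : ℂ | ∃ x y : ℂ, x ^ p = 1 ∧ y ^ q = 1 ∧ w = x - y}).ncard = p * q := by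
  have hinj : Set.InjOn (fun zp : ℂ × ℂ => zp.1 - zp.2)
      (({x : ℂ | x ^ p = 1} : Set ℂ) ×ˢ ({y : ℂ | y ^ q = 1} : Set ℂ)) := by
    rintro ⟨x1, y1⟩ ⟨hx1, hy1⟩ ⟨x2, y2⟩ ⟨hx2, hy2⟩ h
    obtain ⟨h1, h2⟩ := psk_inj hp hq hpq hx1 hy1 hx2 hy2 h
    exact Prod.ext h1 h2
  refine ⟨hinj, ?_⟩
  have himg : {w : ℂ | ∃ x y : ℂ, x ^ p = 1 ∧ y ^ q = 1 ∧ w = x - y} =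
      (fun zp : ℂ × ℂ => zp.1 - zp.2) ''
      (({x : ℂ | x ^ p = 1} : Set ℂ) ×ˢ ({y : ℂ | y ^ q = 1} : Set ℂ)) := by
    ext w
    constructor
    · rintro ⟨x, y, hx, hy, rfl⟩
      exact ⟨(x, y), ⟨hx, hy⟩, rfl⟩
    · rintro ⟨⟨x, y⟩, ⟨hx, hy⟩, rfl⟩
      exact ⟨x, y, hx, hy, rfl⟩
  rw [himg, Set.ncard_image_of_injOn hinj]
  have hsp : ({x : ℂ | x ^ p = 1} : Set ℂ) = ↑(nthRootsFinset p (1 : ℂ)) := by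
    ext x; simp [Polynomial.mem_nthRootsFinset hp (1 : ℂ)]
  have hsq : ({y : ℂ | y ^ q = 1} : Set ℂ) = ↑(nthRootsFinset q (1 : ℂ)) := by
    ext x; simp [Polynomial.mem_nthRootsFinset hq (1 : ℂ)]
  rw [hsp, hsq, ← Finset.coe_product, Set.ncard_coe_finset, Finset.card_product,
    (Complex.isPrimitiveRoot_exp p hp.ne').card_nthRootsFinset,
    (Complex.isPrimitiveRoot_exp q hq.ne').card_nthRootsFinset]
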